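/- Under the hypotheses of the preceding perturbation result (A₀ stable with Σ₀ = A₀Σ₀A₀ᵀ + I, ‖Σ₀^{1/2}(A₀ − A₁)ᵀ‖₂ ≤ η c₀, c₀ ≥ ‖Σ₀^{1/2}A₀ᵀ‖₂, c₀²η(η+2) < 1), the steady-state covariance Σ₁ of A₁, defined by Σ₁ = A₁ Σ₁ A₁ᵀ + I, satisfies Σ₁ ⪯ (1 − c₀² η(η+2))^{-1} Σ₀. -/

import Mathlib

set_option maxHeartbeats 2000000
set_option synthInstance.maxHeartbeats 400000

open Matrix

/-- The spectral norm of a square real matrix, i.e. the operator norm of the induced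
linear map on Euclidean space. -/
noncomputable def sNorm {n : ℕ} (A : Matrix (Fin n) (Fin n) ℝ) : ℝ :=
  ‖Matrix.toEuclideanCLM (𝕜 := ℝ) A‖

/-- The positive semidefinite square root of a positive semidefinite matrix (the definition
removed from Mathlib, restated verbatim). -/
noncomputable def Matrix.PosSemidef.sqrt {n : Type*} [Fintype n] [DecidableEq n] {𝕜 : Type*}
    [RCLike 𝕜] [PartialOrder 𝕜] {A : Matrix n n 𝕜} (hA : A.PosSemidef) : Matrix n n 𝕜 :=
  hA.1.eigenvectorUnitary.1 * diagonal ((↑) ∘ (√·) ∘ hA.1.eigenvalues) *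
  (star hA.1.eigenvectorUnitary : Matrix n n 𝕜)

namespace Stmt5Aux

open ContinuousLinearMap
open scoped RealInnerProductSpace

noncomputable def toE {n : ℕ} (A : Matrix (Fin n) (Fin n) ℝ) :
    EuclideanSpace ℝ (Fin n) →L[ℝ] EuclideanSpace ℝ (Fin n) :=
  Matrix.toEuclideanCLM (𝕜 := ℝ) A

variable {n : ℕ}

lemma toE_mul (A B : Matrix (Fin n) (Fin n) ℝ) : toE (A * B) = toE A * toE B := by
  simp [toE]

lemma toE_add (A B : Matrix (Fin n) (Fin n) ℝ) : toE (A + B) = toE A + toE B :=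
  map_add _ _ _

lemma toE_sub (A B : Matrix (Fin n) (Fin n) ℝ) : toE (A - B) = toE A - toE B :=
  map_sub _ _ _

lemma toE_smul (r : ℝ) (A : Matrix (Fin n) (Fin n) ℝ) : toE (r • A) = r • toE A :=
  map_smul _ _ _

lemma toE_one : toE (1 : Matrix (Fin n) (Fin n) ℝ) = 1 := map_one _

lemma toE_zero : toE (0 : Matrix (Fin n) (Fin n) ℝ) = 0 := map_zero _

lemma toE_star (A : Matrix (Fin n) (Fin n) ℝ) : toE (star A) = star (toE A) :=
  map_star _ A

lemma toE_transpose (A : Matrix (Fin n) (Fin n) ℝ) : toE Aᵀ = adjoint (toE A) := by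
  rw [← star_eq_adjoint, ← toE_star, Matrix.star_eq_conjTranspose,
    conjTranspose_eq_transpose_of_trivial]

lemma toE_reApply (A : Matrix (Fin n) (Fin n) ℝ) (x : EuclideanSpace ℝ (Fin n)) :
    (toE A).reApplyInnerSelf x =
      star (WithLp.equiv 2 _ x) ⬝ᵥ A *ᵥ (WithLp.equiv 2 _ x) := by
  rw [ContinuousLinearMap.reApplyInnerSelf]
  simp [toE, PiLp.inner_apply, dotProduct, mul_comm]

lemma toE_inj {A B : Matrix (Fin n) (Fin n) ℝ} (h : toE A = toE B) : A = B :=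
  Matrix.toEuclideanCLM.injective h

lemma posSemidef_iff_toE (A : Matrix (Fin n) (Fin n) ℝ) :
    A.PosSemidef ↔ (toE A).IsPositive := by
  rw [Matrix.posSemidef_iff_dotProduct_mulVec, ContinuousLinearMap.isPositive_def']
  constructor
  · rintro ⟨h1, h2⟩
    refine ⟨?_, fun x => ?_⟩
    · rw [_root_.IsSelfAdjoint, ← toE_star, Matrix.star_eq_conjTranspose, h1]
    · rw [toE_reApply]; exact h2 _
  · rintro ⟨h1, h2⟩
    refine ⟨?_, fun x => ?_⟩
    · have : toE (star A) = toE A := by rw [toE_star]; exact h1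
      show Aᴴ = A
      rw [← Matrix.star_eq_conjTranspose]; exact toE_inj this
    · have := h2 ((WithLp.equiv 2 _).symm x)
      rw [toE_reApply] at this
      simpa using this


lemma sqrt_herm {S : Matrix (Fin n) (Fin n) ℝ} (hS : S.PosSemidef) : hS.sqrt.IsHermitian := by
  unfold Matrix.PosSemidef.sqrt
  show (_)ᴴ = _
  rw [conjTranspose_mul, conjTranspose_mul, diagonal_conjTranspose, Matrix.mul_assoc]
  simp [Matrix.mul_assoc, Matrix.star_eq_conjTranspose, conjTranspose_eq_transpose_of_trivial]

lemma sqrt_sq {S : Matrix (Fin n) (Fin n) ℝ} (hS : S.PosSemidef) : hS.sqrt ^ 2 = S := by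
  unfold Matrix.PosSemidef.sqrt
  have hU : (star hS.1.eigenvectorUnitary : Matrix (Fin n) (Fin n) ℝ) * hS.1.eigenvectorUnitary.1
      = 1 := Unitary.coe_star_mul_self _
  have hd : diagonal ((↑) ∘ (√·) ∘ hS.1.eigenvalues) * diagonal ((↑) ∘ (√·) ∘ hS.1.eigenvalues)
      = diagonal (RCLike.ofReal ∘ hS.1.eigenvalues : Fin n → ℝ) := by
    rw [diagonal_mul_diagonal]
    congr 1
    funext i
    simp [Real.mul_self_sqrt (hS.eigenvalues_nonneg i)]
  conv_rhs => rw [hS.1.spectral_theorem]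
  rw [pow_two, Unitary.conjStarAlgAut_apply]
  calc _ = hS.1.eigenvectorUnitary.1 * diagonal ((↑) ∘ (√·) ∘ hS.1.eigenvalues) *
      ((star hS.1.eigenvectorUnitary : Matrix (Fin n) (Fin n) ℝ) * hS.1.eigenvectorUnitary.1) *
      diagonal ((↑) ∘ (√·) ∘ hS.1.eigenvalues) *
      (star hS.1.eigenvectorUnitary : Matrix (Fin n) (Fin n) ℝ) := by
        simp only [Matrix.mul_assoc]; rfl
    _ = _ := by rw [hU, Matrix.mul_one, Matrix.mul_assoc _ (diagonal _) (diagonal _), hd]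

lemma sqle {a b : ℝ} (ha : 0 ≤ a) (hb : 0 ≤ b) (h : a ^ 2 ≤ b ^ 2) : a ≤ b := by
  by_contra hc
  push_neg at hc
  nlinarith

end Stmt5Aux

open Stmt5Aux

/-- Under the perturbation hypotheses (`A₀` stable with `Σ₀ = A₀Σ₀A₀ᵀ + I`,
`‖Σ₀^{1/2}(A₀ − A₁)ᵀ‖₂ ≤ ηc₀`, `c₀ ≥ ‖Σ₀^{1/2}A₀ᵀ‖₂`, `c₀²η(η+2) < 1`), the
steady-state covariance `Σ₁ = A₁Σ₁A₁ᵀ + I` of `A₁` satisfies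
`Σ₁ ⪯ (1 − c₀²η(η+2))⁻¹ Σ₀`. -/
theorem stmt5 {n : ℕ} (A₀ A₁ S₀ S₁ : Matrix (Fin n) (Fin n) ℝ)
    (hstab : ∀ μ ∈ spectrum ℂ (A₀.map (algebraMap ℝ ℂ)), ‖μ‖ < 1)
    (hS₀psd : S₀.PosSemidef)
    (hS₀ : S₀ = A₀ * S₀ * A₀ᵀ + 1)
    (c₀ η : ℝ)
    (hc₀ : sNorm (hS₀psd.sqrt * A₀ᵀ) ≤ c₀)
    (hpert : sNorm (hS₀psd.sqrt * (A₀ - A₁)ᵀ) ≤ η * c₀)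
    (hsmall : c₀ ^ 2 * (η * (η + 2)) < 1)
    (hS₁ : S₁ = A₁ * S₁ * A₁ᵀ + 1) :
    ((1 - c₀ ^ 2 * (η * (η + 2)))⁻¹ • S₀ - S₁).PosSemidef := by
  open ContinuousLinearMap in
  open scoped RealInnerProductSpace in
  -- scalar facts
  have hc₀0 : 0 ≤ c₀ := le_trans (norm_nonneg _) hc₀
  have hηc₀0 : 0 ≤ η * c₀ := le_trans (norm_nonneg _) hpert
  set ε : ℝ := c₀ ^ 2 * (η * (η + 2)) with hεdef
  have hε0 : 0 ≤ ε := by nlinarith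
  have h1ε : 0 < 1 - ε := by linarith
  set α : ℝ := (1 - ε)⁻¹ with hαdef
  have hα1 : α * (1 - ε) = 1 := inv_mul_cancel₀ (ne_of_gt h1ε)
  have hα0 : 0 < α := inv_pos.mpr h1ε
  -- operator notation
  set R := toE hS₀psd.sqrt with hRdef
  set T₀ := toE A₀ with hT₀def
  set T₁ := toE A₁ with hT₁def
  set P₀ := toE S₀ with hP₀def
  set P₁ := toE S₁ with hP₁def
  have hRadj : adjoint R = R := by
    rw [← star_eq_adjoint, hRdef, ← toE_star]
    congr 1
    rw [Matrix.star_eq_conjTranspose]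
    exact sqrt_herm hS₀psd
  have hRR : R * R = P₀ := by
    rw [hRdef, hP₀def, ← toE_mul]
    congr 1
    rw [← pow_two]
    exact sqrt_sq hS₀psd
  -- quadratic form of P₀
  have hP₀q : ∀ z : EuclideanSpace ℝ (Fin n), ⟪P₀ z, z⟫ = ‖R z‖ ^ 2 := by
    intro z
    rw [← hRR, ContinuousLinearMap.mul_apply]
    nth_rewrite 1 [← hRadj]
    rw [adjoint_inner_left, real_inner_self_eq_norm_sq]
  -- operator equations
  have hP₀op : P₀ = T₀ * P₀ * adjoint T₀ + 1 := by
    rw [hP₀def, hT₀def]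
    conv_lhs => rw [hS₀]
    rw [toE_add, toE_one, toE_mul, toE_mul, toE_transpose]
  have hP₁op : P₁ = T₁ * P₁ * adjoint T₁ + 1 := by
    rw [hP₁def, hT₁def]
    conv_lhs => rw [hS₁]
    rw [toE_add, toE_one, toE_mul, toE_mul, toE_transpose]
  -- norm hypotheses in operator form
  have hn1 : ‖R * adjoint T₀‖ ≤ c₀ := by
    rw [hRdef, hT₀def, ← toE_transpose, ← toE_mul]; exact hc₀
  have hn2 : ‖R * adjoint (toE (A₀ - A₁))‖ ≤ η * c₀ := by
    rw [hRdef, ← toE_transpose, ← toE_mul]; exact hpert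
  -- key quadratic estimate
  have key2 : ∀ x : EuclideanSpace ℝ (Fin n),
      ‖R (adjoint T₁ x)‖ ^ 2 ≤ ‖R x‖ ^ 2 - (1 - ε) * ‖x‖ ^ 2 := by
    intro x
    have hadjd : adjoint (toE (A₀ - A₁)) = adjoint T₀ - adjoint T₁ := by
      rw [toE_sub, map_sub, hT₀def, hT₁def]
    have hsplit : R (adjoint T₁ x)
        = (R * adjoint T₀) x - (R * adjoint (toE (A₀ - A₁))) x := by
      rw [hadjd]
      simp [ContinuousLinearMap.mul_apply, ContinuousLinearMap.sub_apply, map_sub]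
    set a := (R * adjoint T₀) x with hadef
    set b := (R * adjoint (toE (A₀ - A₁))) x with hbdef
    have ha : ‖a‖ ≤ c₀ * ‖x‖ :=
      le_trans (le_opNorm _ _) (mul_le_mul_of_nonneg_right hn1 (norm_nonneg x))
    have hb : ‖b‖ ≤ (η * c₀) * ‖x‖ :=
      le_trans (le_opNorm _ _) (mul_le_mul_of_nonneg_right hn2 (norm_nonneg x))
    have hA2 : ‖a‖ ^ 2 = ‖R x‖ ^ 2 - ‖x‖ ^ 2 := by
      have e1 : ‖a‖ ^ 2 = ⟪P₀ (adjoint T₀ x), adjoint T₀ x⟫ := by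
        rw [hP₀q]; rfl
      have e2 : ⟪P₀ (adjoint T₀ x), adjoint T₀ x⟫ = ⟪(T₀ * P₀ * adjoint T₀) x, x⟫ := by
        rw [ContinuousLinearMap.mul_apply, ContinuousLinearMap.mul_apply]
        rw [real_inner_comm, adjoint_inner_left, real_inner_comm]
      have e3 : (T₀ * P₀ * adjoint T₀) x = P₀ x - x := by
        have h : T₀ * P₀ * adjoint T₀ = P₀ - 1 := eq_sub_iff_add_eq.mpr hP₀op.symm
        rw [h]; rfl
      rw [e1, e2, e3, inner_sub_left, hP₀q, real_inner_comm,
        real_inner_self_eq_norm_sq]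
    have hip : |⟪a, b⟫| ≤ ‖a‖ * ‖b‖ := abs_real_inner_le_norm a b
    have hsq : ‖a - b‖ ^ 2 = ‖a‖ ^ 2 - 2 * ⟪a, b⟫ + ‖b‖ ^ 2 := norm_sub_sq_real a b
    rw [hsplit, hsq, hA2]
    have hab : ‖a‖ * ‖b‖ ≤ (c₀ * ‖x‖) * ((η * c₀) * ‖x‖) :=
      mul_le_mul ha hb (norm_nonneg b) (by positivity)
    have hb2 : ‖b‖ ^ 2 ≤ ((η * c₀) * ‖x‖) ^ 2 :=
      pow_le_pow_left₀ (norm_nonneg b) hb 2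
    have hlb : -(‖a‖ * ‖b‖) ≤ ⟪a, b⟫ := by
      have := neg_abs_le ⟪a, b⟫; linarith
    rw [hεdef]
    nlinarith [norm_nonneg a, norm_nonneg b, norm_nonneg x]
  -- P₀ ⪰ 1
  have key3 : ∀ z : EuclideanSpace ℝ (Fin n), ‖z‖ ^ 2 ≤ ‖R z‖ ^ 2 := by
    intro z
    have e2 : ⟪P₀ (adjoint T₀ z), adjoint T₀ z⟫ = ⟪(T₀ * P₀ * adjoint T₀) z, z⟫ := by
      rw [ContinuousLinearMap.mul_apply, ContinuousLinearMap.mul_apply]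
      rw [real_inner_comm, adjoint_inner_left, real_inner_comm]
    have e3 : (T₀ * P₀ * adjoint T₀) z = P₀ z - z := by
      have h : T₀ * P₀ * adjoint T₀ = P₀ - 1 := eq_sub_iff_add_eq.mpr hP₀op.symm
      rw [h]; rfl
    have e4 : (0:ℝ) ≤ ⟪P₀ (adjoint T₀ z), adjoint T₀ z⟫ := by
      rw [hP₀q]; positivity
    rw [e2, e3, inner_sub_left, hP₀q, real_inner_comm z,
      real_inner_self_eq_norm_sq] at e4
    linarith
  -- contraction constant
  set C : ℝ := ‖R‖ ^ 2 + 1 with hCdef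
  have hC0 : (0:ℝ) < C := by positivity
  have hC1 : (1:ℝ) ≤ C := by nlinarith [sq_nonneg ‖R‖]
  set q : ℝ := 1 - (1 - ε) / C with hqdef
  have hq0 : 0 ≤ q := by
    rw [hqdef, sub_nonneg, div_le_one hC0]; linarith
  have hq1 : q < 1 := by
    rw [hqdef]; have : 0 < (1 - ε) / C := div_pos h1ε hC0; linarith
  have key4 : ∀ z : EuclideanSpace ℝ (Fin n),
      ‖R (adjoint T₁ z)‖ ^ 2 ≤ q * ‖R z‖ ^ 2 := by
    intro z
    have h2 := key2 z
    have h3 : ‖R z‖ ^ 2 ≤ C * ‖z‖ ^ 2 := by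
      have := le_opNorm R z
      nlinarith [norm_nonneg (R z), norm_nonneg z, opNorm_nonneg R, sq_nonneg ‖z‖]
    have h4 : (1 - ε) / C * ‖R z‖ ^ 2 ≤ (1 - ε) * ‖z‖ ^ 2 := by
      rw [div_mul_eq_mul_div, div_le_iff₀ hC0]
      nlinarith
    rw [hqdef]
    nlinarith
  -- iterated contraction
  have key5 : ∀ (k : ℕ) (x : EuclideanSpace ℝ (Fin n)),
      ‖R (((adjoint T₁) ^ k) x)‖ ^ 2 ≤ q ^ k * ‖R x‖ ^ 2 := by
    intro k
    induction k with
    | zero => intro x; simp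
    | succ k ih =>
      intro x
      have hx : ((adjoint T₁) ^ (k + 1)) x = ((adjoint T₁) ^ k) (adjoint T₁ x) := by
        rw [pow_succ, ContinuousLinearMap.mul_apply]
      rw [hx]
      calc ‖R (((adjoint T₁) ^ k) (adjoint T₁ x))‖ ^ 2
          ≤ q ^ k * ‖R (adjoint T₁ x)‖ ^ 2 := ih _
        _ ≤ q ^ k * (q * ‖R x‖ ^ 2) :=
            mul_le_mul_of_nonneg_left (key4 x) (pow_nonneg hq0 k)
        _ = q ^ (k + 1) * ‖R x‖ ^ 2 := by ring
  have key5' : ∀ (k : ℕ) (x : EuclideanSpace ℝ (Fin n)),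
      ‖((adjoint T₁) ^ k) x‖ ^ 2 ≤ q ^ k * ‖R x‖ ^ 2 :=
    fun k x => le_trans (key3 _) (key5 k x)
  -- norm of powers
  have hpow : ∀ k : ℕ, ‖(adjoint T₁) ^ k‖ ≤ Real.sqrt (q ^ k) * ‖R‖ := by
    intro k
    apply opNorm_le_bound _ (by positivity)
    intro x
    apply sqle (norm_nonneg _) (by positivity)
    have : (Real.sqrt (q ^ k) * ‖R‖ * ‖x‖) ^ 2 = q ^ k * (‖R‖ * ‖x‖) ^ 2 := by
      rw [mul_pow, mul_pow, Real.sq_sqrt (pow_nonneg hq0 k)]; ring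
    rw [this]
    calc ‖((adjoint T₁) ^ k) x‖ ^ 2 ≤ q ^ k * ‖R x‖ ^ 2 := key5' k x
      _ ≤ q ^ k * (‖R‖ * ‖x‖) ^ 2 := by
          apply mul_le_mul_of_nonneg_left _ (pow_nonneg hq0 k)
          exact pow_le_pow_left₀ (norm_nonneg _) (le_opNorm R x) 2
  have hpow' : ∀ k : ℕ, ‖T₁ ^ k‖ ≤ Real.sqrt (q ^ k) * ‖R‖ := by
    intro k
    have hadjpow : adjoint (T₁ ^ k) = (adjoint T₁) ^ k := by
      rw [← star_eq_adjoint, star_pow, star_eq_adjoint]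
    have h : ‖T₁ ^ k‖ = ‖(adjoint T₁) ^ k‖ := by
      rw [← hadjpow]
      exact (ContinuousLinearMap.adjoint.norm_map (T₁ ^ k)).symm
    rw [h]; exact hpow k
  -- S₁ is Hermitian
  have hS₁h : S₁.IsHermitian := by
    have hXeq : S₁ - S₁ᵀ = A₁ * (S₁ - S₁ᵀ) * A₁ᵀ := by
      have ht : S₁ᵀ = A₁ * S₁ᵀ * A₁ᵀ + 1 := by
        conv_lhs => rw [hS₁]
        rw [Matrix.transpose_add, Matrix.transpose_one, Matrix.transpose_mul,
          Matrix.transpose_mul, Matrix.transpose_transpose, Matrix.mul_assoc]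
      calc S₁ - S₁ᵀ = (A₁ * S₁ * A₁ᵀ + 1) - (A₁ * S₁ᵀ * A₁ᵀ + 1) := by
            rw [← ht, ← hS₁]
        _ = A₁ * (S₁ - S₁ᵀ) * A₁ᵀ := by noncomm_ring
    set X := toE (S₁ - S₁ᵀ) with hXdef
    have hX1 : X = T₁ * X * adjoint T₁ := by
      rw [hXdef, hT₁def]
      conv_lhs => rw [hXeq]
      rw [toE_mul, toE_mul, toE_transpose]
    have hXk : ∀ k : ℕ, X = T₁ ^ k * X * (adjoint T₁) ^ k := by
      intro k
      induction k with
      | zero => simp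
      | succ k ih =>
        calc X = T₁ ^ k * X * (adjoint T₁) ^ k := ih
          _ = T₁ ^ k * (T₁ * X * adjoint T₁) * (adjoint T₁) ^ k := by rw [← hX1]
          _ = T₁ ^ (k + 1) * X * (adjoint T₁) ^ (k + 1) := by
              rw [pow_succ, pow_succ']; noncomm_ring
    have hXnorm : ∀ k : ℕ, ‖X‖ ≤ q ^ k * (‖R‖ ^ 2 * ‖X‖) := by
      intro k
      calc ‖X‖ = ‖T₁ ^ k * X * (adjoint T₁) ^ k‖ := by rw [← hXk k]
        _ ≤ ‖T₁ ^ k * X‖ * ‖(adjoint T₁) ^ k‖ := norm_mul_le _ _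
        _ ≤ ‖T₁ ^ k‖ * ‖X‖ * ‖(adjoint T₁) ^ k‖ :=
            mul_le_mul_of_nonneg_right (norm_mul_le _ _) (norm_nonneg _)
        _ ≤ (Real.sqrt (q ^ k) * ‖R‖) * ‖X‖ * (Real.sqrt (q ^ k) * ‖R‖) := by
            apply mul_le_mul _ (hpow k) (norm_nonneg _) (by positivity)
            exact mul_le_mul_of_nonneg_right (hpow' k) (norm_nonneg _)
        _ = (Real.sqrt (q ^ k)) ^ 2 * (‖R‖ ^ 2 * ‖X‖) := by ring
        _ = q ^ k * (‖R‖ ^ 2 * ‖X‖) := by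
            rw [Real.sq_sqrt (pow_nonneg hq0 k)]
    have hten : Filter.Tendsto (fun k : ℕ => q ^ k * (‖R‖ ^ 2 * ‖X‖))
        Filter.atTop (nhds 0) := by
      have := (tendsto_pow_atTop_nhds_zero_of_lt_one hq0 hq1).mul_const (‖R‖ ^ 2 * ‖X‖)
      simpa using this
    have hX0 : ‖X‖ ≤ 0 := ge_of_tendsto hten (Filter.Eventually.of_forall fun k => hXnorm k)
    have hXz : X = 0 := norm_le_zero_iff.mp hX0
    have hsub : S₁ - S₁ᵀ = 0 := by
      apply toE_inj
      rw [← hXdef, hXz, toE_zero]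
    have hT : S₁ᵀ = S₁ := by
      rw [sub_eq_zero] at hsub; exact hsub.symm
    show S₁ᴴ = S₁
    rw [conjTranspose_eq_transpose_of_trivial]; exact hT
  -- the difference operator
  set D := α • P₀ - P₁ with hDdef
  have hfin : toE (α • S₀ - S₁) = D := by
    rw [toE_sub, toE_smul, hDdef, hP₀def, hP₁def]
  have hMh : (α • S₀ - S₁)ᴴ = α • S₀ - S₁ := by
    rw [Matrix.conjTranspose_sub, Matrix.conjTranspose_smul, hS₀psd.isHermitian, hS₁h,
      star_trivial]
  have hDsa : IsSelfAdjoint D := by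
    show star D = D
    rw [← hfin, ← toE_star, Matrix.star_eq_conjTranspose, hMh]
  -- monotonicity under adjoint T₁
  have key7 : ∀ x : EuclideanSpace ℝ (Fin n),
      ⟪D (adjoint T₁ x), adjoint T₁ x⟫ ≤ ⟪D x, x⟫ := by
    intro x
    have hP₁x : ⟪P₁ x, x⟫ = ⟪P₁ (adjoint T₁ x), adjoint T₁ x⟫ + ‖x‖ ^ 2 := by
      conv_lhs => rw [hP₁op]
      rw [ContinuousLinearMap.add_apply, inner_add_left,
        ContinuousLinearMap.one_apply, real_inner_self_eq_norm_sq]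
      congr 1
      have e2' : ⟪P₁ (adjoint T₁ x), adjoint T₁ x⟫ = ⟪(T₁ * P₁ * adjoint T₁) x, x⟫ := by
        rw [ContinuousLinearMap.mul_apply, ContinuousLinearMap.mul_apply]
        rw [real_inner_comm, adjoint_inner_left, real_inner_comm]
      exact e2'.symm
    have h2 := key2 x
    have hDx : ⟪D x, x⟫ = α * ⟪P₀ x, x⟫ - ⟪P₁ x, x⟫ := by
      rw [hDdef, ContinuousLinearMap.sub_apply, inner_sub_left,
        ContinuousLinearMap.smul_apply, real_inner_smul_left]
    have hDy : ⟪D (adjoint T₁ x), adjoint T₁ x⟫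
        = α * ⟪P₀ (adjoint T₁ x), adjoint T₁ x⟫ - ⟪P₁ (adjoint T₁ x), adjoint T₁ x⟫ := by
      rw [hDdef, ContinuousLinearMap.sub_apply, inner_sub_left,
        ContinuousLinearMap.smul_apply, real_inner_smul_left]
    rw [hDx, hDy, hP₁x, hP₀q, hP₀q]
    nlinarith [key2 x]
  have key8 : ∀ (k : ℕ) (x : EuclideanSpace ℝ (Fin n)),
      ⟪D (((adjoint T₁) ^ k) x), ((adjoint T₁) ^ k) x⟫ ≤ ⟪D x, x⟫ := by
    intro k
    induction k with
    | zero => intro x; simp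
    | succ k ih =>
      intro x
      have hx : ((adjoint T₁) ^ (k + 1)) x = ((adjoint T₁) ^ k) (adjoint T₁ x) := by
        rw [pow_succ, ContinuousLinearMap.mul_apply]
      rw [hx]
      exact le_trans (ih (adjoint T₁ x)) (key7 x)
  -- positivity of quadratic form of D
  have hposD : ∀ x : EuclideanSpace ℝ (Fin n), 0 ≤ ⟪D x, x⟫ := by
    intro x
    have hlb : ∀ k : ℕ, -(q ^ k * (‖D‖ * ‖R x‖ ^ 2)) ≤ ⟪D x, x⟫ := by
      intro k
      set z := ((adjoint T₁) ^ k) x with hzdef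
      have h1 : |⟪D z, z⟫| ≤ ‖D z‖ * ‖z‖ := abs_real_inner_le_norm _ _
      have h2 : ‖D z‖ ≤ ‖D‖ * ‖z‖ := le_opNorm _ _
      have h3 : ‖z‖ ^ 2 ≤ q ^ k * ‖R x‖ ^ 2 := key5' k x
      have h4 : -(‖D‖ * ‖z‖ ^ 2) ≤ ⟪D z, z⟫ := by
        have := neg_abs_le ⟪D z, z⟫
        nlinarith [norm_nonneg z, norm_nonneg (D z), opNorm_nonneg D]
      have h5 : -(q ^ k * (‖D‖ * ‖R x‖ ^ 2)) ≤ -(‖D‖ * ‖z‖ ^ 2) := by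
        have := mul_le_mul_of_nonneg_left h3 (opNorm_nonneg D)
        nlinarith
      exact le_trans (le_trans h5 h4) (key8 k x)
    have hten : Filter.Tendsto (fun k : ℕ => -(q ^ k * (‖D‖ * ‖R x‖ ^ 2)))
        Filter.atTop (nhds 0) := by
      have := ((tendsto_pow_atTop_nhds_zero_of_lt_one hq0 hq1).mul_const
        (‖D‖ * ‖R x‖ ^ 2)).neg
      simpa using this
    exact le_of_tendsto hten (Filter.Eventually.of_forall hlb)
  -- conclude
  rw [posSemidef_iff_toE]
  rw [hfin]
  exact ⟨hDsa.isSymmetric, fun x => hposD x⟩
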